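/- Let x, a ∈ [0,1]. The function y : [0,∞) → ℝ defined by y(t) = (1/t)·log(a + (1−a)·e^{tx}) for t > 0 and y(0) = x(1−a) is differentiable and satisfies the ODE y′(t) = λ_x(y(t), t) for all t ≥ 0, with initial condition y(0) = x(1−a); moreover y(t) ∈ [0, x] for all t ≥ 0. -/

import Mathlib

open Real Set Function
open scoped ContDiff

/-- The rescaled rate `λ_x(y,t)`. -/
noncomputable def lam (x y t : ℝ) : ℝ :=
  if t = 0 then (1 / 2 : ℝ) * y * (x - y)
  else if x = 0 then (1 / t) * (-y + (1 - Real.exp (-t * y)) / t)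
  else (1 / t) * (-y + x * Real.exp (t * x) * (1 - Real.exp (-t * y)) / (Real.exp (t * x) - 1))

theorem stmt3 (x a : ℝ) (hx : x ∈ Set.Icc (0 : ℝ) 1) (ha : a ∈ Set.Icc (0 : ℝ) 1)
    (y : ℝ → ℝ)
    (hy : ∀ t : ℝ, 0 < t → y t = (1 / t) * Real.log (a + (1 - a) * Real.exp (t * x)))
    (hy0 : y 0 = x * (1 - a)) :
    ∀ t : ℝ, 0 ≤ t →
      HasDerivWithinAt y (lam x (y t) t) (Set.Ici 0) t ∧ y t ∈ Set.Icc 0 x := by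
  obtain ⟨hx0, hx1⟩ := hx
  obtain ⟨ha0, ha1⟩ := ha
  by_cases hdeg : x = 0 ∨ a = 1
  · -- degenerate case: y ≡ 0 on [0,∞)
    have hy' : ∀ t : ℝ, 0 ≤ t → y t = 0 := by
      intro t ht
      rcases eq_or_lt_of_le ht with h | h
      · rw [← h, hy0]; rcases hdeg with rfl | rfl <;> ring
      · rw [hy t h]; rcases hdeg with rfl | rfl <;> simp
    intro t ht
    refine ⟨?_, by rw [hy' t ht]; exact ⟨le_refl 0, hx0⟩⟩
    have hlam : lam x (y t) t = 0 := by
      rw [hy' t ht]; unfold lam; split_ifs <;> simp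
    rw [hlam]
    exact ((hasDerivAt_const t (0:ℝ)).hasDerivWithinAt).congr
      (fun s hs => hy' s hs) (hy' t ht)
  push_neg at hdeg
  obtain ⟨hxne, hane⟩ := hdeg
  have hxpos : 0 < x := lt_of_le_of_ne hx0 (Ne.symm hxne)
  have hc : 0 < 1 - a := by rcases lt_of_le_of_ne ha1 hane with h; linarith
  set g : ℝ → ℝ := fun t => a + (1 - a) * Real.exp (t * x) with hgdef
  have hgpos : ∀ t, 0 < g t := by
    intro t
    have := Real.exp_pos (t * x)
    simp only [hgdef]
    nlinarith
  set F : ℝ → ℝ := fun t => Real.log (g t) with hFdef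
  have hg0 : g 0 = 1 := by simp [hgdef]
  have hF0 : F 0 = 0 := by simp [hFdef, hg0]
  have hgd : ∀ t, HasDerivAt g ((1 - a) * (Real.exp (t * x) * x)) t := by
    intro t
    have h1 : HasDerivAt (fun s : ℝ => s * x) x t := by
      simpa using (hasDerivAt_id t).mul_const x
    exact (((h1.exp).const_mul (1 - a)).const_add a)
  have hFd : ∀ t, HasDerivAt F ((1 - a) * (Real.exp (t * x) * x) / g t) t :=
    fun t => (hgd t).log (hgpos t).ne'
  have hderivF : deriv F = fun t => (1 - a) * (Real.exp (t * x) * x) / g t :=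
    funext fun t => (hFd t).deriv
  -- y agrees with dslope F 0 on [0,∞)
  have y_eq : ∀ s ∈ Ici (0:ℝ), y s = dslope F 0 s := by
    intro s hs
    rcases eq_or_lt_of_le (mem_Ici.mp hs) with h | h
    · rw [← h, dslope_same, hderivF, hy0]
      simp only [zero_mul, Real.exp_zero, mul_one, hg0]
      ring
    · rw [dslope_of_ne F h.ne', slope_def_field, hy s h, hF0, sub_zero, sub_zero]
      simp only [hFdef]
      ring
  -- bounds
  have hbounds : ∀ t : ℝ, 0 ≤ t → y t ∈ Icc 0 x := by
    intro t ht
    rcases eq_or_lt_of_le ht with h | h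
    · rw [← h, hy0]
      constructor
      · nlinarith
      · nlinarith
    · have hE1 : 1 ≤ Real.exp (t * x) := by
        have : (0:ℝ) ≤ t * x := by positivity
        nlinarith [Real.add_one_le_exp (t * x)]
      have hg1 : 1 ≤ g t := by simp only [hgdef]; nlinarith
      have hgle : g t ≤ Real.exp (t * x) := by simp only [hgdef]; nlinarith
      have hFnn : 0 ≤ F t := Real.log_nonneg hg1
      have hFle : F t ≤ t * x := by
        have := Real.log_le_log (hgpos t) hgle
        rwa [Real.log_exp] at this
      rw [hy t h]
      constructor
      · positivity
      · rw [one_div, inv_mul_le_iff₀ h]  -- (1/t) * F t ≤ x  ↔ F t ≤ t * x ?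
        linarith [hFle]
  intro t ht
  refine ⟨?_, hbounds t ht⟩
  rcases eq_or_lt_of_le ht with h | h
  · -- t = 0 case
    subst h
    have hganal : AnalyticAt ℝ g 0 :=
      analyticAt_const.add (analyticAt_const.mul
        (analyticAt_rexp.comp (analyticAt_id.mul analyticAt_const)))
    have hFanal : AnalyticAt ℝ F 0 :=
      (((contDiffAt_log (n := ω)).mpr (hgpos 0).ne').analyticAt).comp hganal
    obtain ⟨p, hp⟩ := hFanal
    have hq := hp.has_fpower_series_dslope_fslope
    have hd0 : HasDerivAt (dslope F 0) (p.fslope 1 fun _ => 1) 0 := hq.hasDerivAt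
    have hcoe : (p.fslope 1 fun _ => 1) = p.coeff 2 := by
      rw [show (p.fslope 1 fun _ => 1) = p.fslope.coeff 1 from rfl,
        FormalMultilinearSeries.coeff_fslope]
    have hu : HasDerivAt (fun t : ℝ => (1 - a) * (Real.exp (t * x) * x))
        ((1 - a) * (Real.exp (0 * x) * x * x)) 0 := by
      have h1 : HasDerivAt (fun s : ℝ => s * x) x 0 := by
        simpa using (hasDerivAt_id (0:ℝ)).mul_const x
      exact (h1.exp.mul_const x).const_mul (1 - a)
    have hdd : HasDerivAt (deriv F) (a * (1 - a) * x ^ 2) 0 := by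
      rw [hderivF]
      have hdiv := hu.div (hgd 0) (hgpos 0).ne'
      refine HasDerivAt.congr_deriv hdiv ?_
      rw [hg0]
      simp only [zero_mul, Real.exp_zero, one_mul, mul_one]
      ring
    have h2 : iteratedDeriv 2 F 0 = a * (1 - a) * x ^ 2 := by
      rw [iteratedDeriv_succ, iteratedDeriv_one]
      exact hdd.deriv
    have hfact : (2 : ℕ) • p.coeff 2 = iteratedDeriv 2 F 0 := by
      obtain ⟨r, hr⟩ := hp
      have hfs := hr.factorial_smul (1 : ℝ) 2
      rw [iteratedDeriv_eq_iteratedFDeriv]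
      simpa [Nat.factorial] using hfs
    have h3 : (2 : ℝ) * p.coeff 2 = a * (1 - a) * x ^ 2 := by
      rw [← h2, ← hfact]
      simp [nsmul_eq_mul]
    have hval : (p.fslope 1 fun _ => 1) = lam x (y 0) 0 := by
      rw [hcoe, lam, if_pos rfl, hy0]
      nlinarith [h3]
    rw [← hval]
    exact hd0.hasDerivWithinAt.congr (fun s hs => y_eq s hs) (y_eq 0 (mem_Ici.mpr le_rfl))
  · -- t > 0 case
    have hne : t ≠ 0 := h.ne'
    have hd1 : HasDerivAt (fun s => F s / s)
        (((1 - a) * (Real.exp (t * x) * x) / g t * t - F t * 1) / t ^ 2) t :=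
      (hFd t).div (hasDerivAt_id t) hne
    have hloc : dslope F 0 =ᶠ[nhds t] fun s => F s / s := by
      filter_upwards [compl_singleton_mem_nhds hne] with s hs
      rw [dslope_of_ne F hs, slope_def_field, hF0, sub_zero, sub_zero]
    have hd2 : HasDerivAt (dslope F 0)
        (((1 - a) * (Real.exp (t * x) * x) / g t * t - F t * 1) / t ^ 2) t :=
      hd1.congr_of_eventuallyEq hloc
    have hval : lam x (y t) t
        = ((1 - a) * (Real.exp (t * x) * x) / g t * t - F t * 1) / t ^ 2 := by
      have hyt : y t = F t / t := by rw [hy t h]; ring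
      have htyt : t * y t = F t := by rw [hyt]; field_simp
      have hexy : Real.exp (-t * y t) = (g t)⁻¹ := by
        rw [neg_mul, htyt, Real.exp_neg, Real.exp_log (hgpos t)]
      have hE1 : 1 < Real.exp (t * x) := by
        rw [show (1:ℝ) = Real.exp 0 by simp]
        exact Real.exp_lt_exp.mpr (by positivity)
      have hEne : Real.exp (t * x) - 1 ≠ 0 := by linarith
      rw [lam, if_neg hne, if_neg hxne, hexy, hyt]
      have hgne : g t ≠ 0 := (hgpos t).ne'
      field_simp [hgdef]
      ring
    rw [hval] at *
    exact hd2.hasDerivWithinAt.congr (fun s hs => y_eq s hs) (y_eq t ht)
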